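/- Let (d_l) be defined by d_1 = d_2 = 5/36 and d_{l+1} = d_l + Σ_{i=1}^{l-1} d_i d_{l-i} / ((l+1)·binom(l,i)) for l ≥ 2. Then (d_l) is increasing, and if d_l ≤ d for all l where d is the limit of the sequence, then for all j ≥ 2, d_{j+1} - d_j ≤ 8d^2/(j(j+1)). -/

import Mathlib

open Finset Nat

lemma choose_mono_right {n a b : ℕ} (hab : a ≤ b) (hb : b ≤ n / 2) :
    n.choose a ≤ n.choose b := by
  induction b, hab using Nat.le_induction with
  | base => exact le_refl _
  | succ b hb' ih =>
      exact le_trans (ih (by omega)) (Nat.choose_le_succ_of_lt_half_left (by omega))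

lemma choose_two_le {j i : ℕ} (h2 : 2 ≤ i) (hij : i + 2 ≤ j) :
    j.choose 2 ≤ j.choose i := by
  rcases le_or_gt i (j / 2) with h | h
  · exact choose_mono_right h2 h
  · rw [← Nat.choose_symm (by omega : i ≤ j)]
    exact choose_mono_right (by omega) (by omega)

lemma two_mul_choose_two (j : ℕ) : 2 * j.choose 2 = j * (j - 1) := by
  rw [Nat.choose_two_right]
  rcases Nat.even_or_odd j with ⟨k, hk⟩ | ⟨k, hk⟩ <;> subst hk <;>
    [skip; rcases k with _ | k] <;> ring_nf <;> omega

lemma sum_inv_choose_le (j : ℕ) (hj : 2 ≤ j) :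
    ∑ i ∈ Finset.Icc 1 (j - 1), (1 : ℝ) / (j.choose i) ≤ 4 / j := by
  have hj0 : (0:ℝ) < j := by positivity
  have hj1 : (0:ℝ) < (j:ℝ) - 1 := by
    have : (2:ℝ) ≤ j := by exact_mod_cast hj
    linarith
  have key : ∀ i ∈ Finset.Icc 1 (j - 1), (1 : ℝ) / (j.choose i) ≤
      2 / ((j : ℝ) * ((j:ℝ) - 1)) + ((if i = 1 then (1:ℝ)/j else 0)
        + (if i = j - 1 then (1:ℝ) / j else 0)) := by
    intro i hi
    simp only [Finset.mem_Icc] at hi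
    by_cases hi1 : i = 1
    · subst hi1
      rw [Nat.choose_one_right]
      have h2 : (0:ℝ) < 2 / ((j : ℝ) * ((j:ℝ) - 1)) := by positivity
      have h3 : (0:ℝ) < 1 / (j:ℝ) := by positivity
      split_ifs <;> first | omega | linarith
    by_cases hi2 : i = j - 1
    · subst hi2
      rw [Nat.choose_symm (by omega : 1 ≤ j), Nat.choose_one_right]
      have h2 : (0:ℝ) < 2 / ((j : ℝ) * ((j:ℝ) - 1)) := by positivity
      have h3 : (0:ℝ) < 1 / (j:ℝ) := by positivity
      split_ifs <;> first | omega | linarith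
    -- middle case
    have hmid : 2 ≤ i ∧ i + 2 ≤ j := by omega
    have hcle : j * (j - 1) ≤ 2 * j.choose i := by
      rw [← two_mul_choose_two]
      exact Nat.mul_le_mul_left 2 (choose_two_le hmid.1 hmid.2)
    have hcle' : (j:ℝ) * ((j:ℝ) - 1) ≤ 2 * (j.choose i : ℝ) := by
      have := hcle
      have hcast : ((j * (j-1) : ℕ) : ℝ) = (j:ℝ) * ((j:ℝ) - 1) := by
        push_cast [Nat.cast_sub (by omega : 1 ≤ j)]; ring
      calc (j:ℝ) * ((j:ℝ) - 1) = ((j * (j-1) : ℕ) : ℝ) := hcast.symm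
        _ ≤ ((2 * j.choose i : ℕ) : ℝ) := by exact_mod_cast this
        _ = 2 * (j.choose i : ℝ) := by push_cast; ring
    have hC : (0:ℝ) < (j.choose i : ℝ) := by
      have : 0 < j.choose i := Nat.choose_pos (by omega)
      exact_mod_cast this
    have : (1:ℝ)/(j.choose i) ≤ 2 / ((j : ℝ) * ((j:ℝ) - 1)) := by
      rw [div_le_div_iff₀ hC (by positivity)]
      linarith
    simp only [if_neg hi1, if_neg hi2]; linarith
  calc ∑ i ∈ Finset.Icc 1 (j - 1), (1 : ℝ) / (j.choose i)
      ≤ ∑ i ∈ Finset.Icc 1 (j - 1), (2 / ((j : ℝ) * ((j:ℝ) - 1)) + ((if i = 1 then (1:ℝ)/j else 0)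
        + (if i = j - 1 then (1:ℝ) / j else 0))) := Finset.sum_le_sum key
    _ = (j - 1 : ℕ) * (2 / ((j : ℝ) * ((j:ℝ) - 1))) + ((1:ℝ)/j + (1:ℝ)/j) := by
        rw [Finset.sum_add_distrib, Finset.sum_add_distrib, Finset.sum_const,
          Nat.card_Icc, Finset.sum_ite_eq' _ 1 (fun _ => (1:ℝ)/j),
          Finset.sum_ite_eq' _ (j-1) (fun _ => (1:ℝ)/j)]
        simp [Finset.mem_Icc, (by omega : 1 ≤ j - 1), nsmul_eq_mul]
    _ ≤ 4 / j := by
        have hcast : ((j - 1 : ℕ) : ℝ) = (j:ℝ) - 1 := by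
          push_cast [Nat.cast_sub (by omega : 1 ≤ j)]; ring
        rw [hcast]
        have : ((j:ℝ) - 1) * (2 / ((j : ℝ) * ((j:ℝ) - 1))) = 2 / j := by
          field_simp
        rw [this]
        rw [div_add_div _ _ (ne_of_gt hj0) (ne_of_gt hj0), div_add_div _ _ (ne_of_gt hj0) (by positivity)]
        rw [div_le_div_iff₀ (by positivity) hj0]
        ring_nf
        nlinarith

/-- Wright's sequence `d_l` (with `d_1 = d_2 = 5/36` and the quadratic recursion)
is increasing, and if `D` bounds the sequence (e.g. `D` is its limit), then
`d_{j+1} - d_j ≤ 8 D² / (j(j+1))` for all `j ≥ 2`. -/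
theorem stmt1 (d : ℕ → ℝ) (h1 : d 1 = 5 / 36) (h2 : d 2 = 5 / 36)
    (hrec : ∀ l ≥ 2, d (l + 1) =
      d l + ∑ i ∈ Finset.Icc 1 (l - 1), d i * d (l - i) / (((l : ℝ) + 1) * (l.choose i)))
    (D : ℝ) (hlim : Filter.Tendsto d Filter.atTop (nhds D))
    (hD : ∀ l ≥ 1, d l ≤ D) :
    (∀ l ≥ 1, d l ≤ d (l + 1)) ∧
      (∀ j ≥ 2, d (j + 1) - d j ≤ 8 * D ^ 2 / ((j : ℝ) * ((j : ℝ) + 1))) := by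
  have hpos : ∀ l, 1 ≤ l → 0 < d l := by
    intro l
    induction l using Nat.strong_induction_on with
    | _ l ih =>
      intro hl
      match l, hl with
      | 1, _ => rw [h1]; norm_num
      | 2, _ => rw [h2]; norm_num
      | (m+3), _ =>
        have hr := hrec (m+2) (by omega)
        have hsum' : 0 ≤ ∑ i ∈ Finset.Icc 1 (m+2-1),
            d i * d (m+2-i) / ((((m+2 : ℕ) : ℝ) + 1) * ((m+2 : ℕ).choose i)) := by
          apply Finset.sum_nonneg
          intro i hi
          simp only [Finset.mem_Icc] at hi
          have ha := ih i (by omega) (by omega)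
          have hb := ih (m+2-i) (by omega) (by omega)
          have hc : (0:ℝ) ≤ (((m+2:ℕ):ℝ) + 1) * ((m+2:ℕ).choose i) := by positivity
          exact div_nonneg (mul_nonneg ha.le hb.le) hc
        have hprev := ih (m+2) (by omega) (by omega)
        have : d (m+3) = d (m+2) + ∑ i ∈ Finset.Icc 1 (m+2-1),
            d i * d (m+2-i) / ((((m+2 : ℕ) : ℝ) + 1) * ((m+2 : ℕ).choose i)) := hr
        linarith
  have hsumnn' : ∀ l, 2 ≤ l → 0 ≤ ∑ i ∈ Finset.Icc 1 (l-1),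
      d i * d (l-i) / ((((l : ℕ) : ℝ) + 1) * ((l : ℕ).choose i)) := by
    intro l hl
    apply Finset.sum_nonneg
    intro i hi
    simp only [Finset.mem_Icc] at hi
    have ha := hpos i (by omega)
    have hb := hpos (l-i) (by omega)
    have hc : (0:ℝ) ≤ (((l:ℕ):ℝ) + 1) * ((l:ℕ).choose i) := by positivity
    exact div_nonneg (mul_nonneg ha.le hb.le) hc
  have hD0 : 0 ≤ D := le_trans (by rw [h1] at *; norm_num) (hD 1 (le_refl 1))
  constructor
  · intro l hl
    match l, hl with
    | 1, _ => rw [h1, h2]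
    | (m+2), _ =>
      have hr := hrec (m+2) (by omega)
      have := hsumnn' (m+2) (by omega)
      rw [hr]
      push_cast at this ⊢
      linarith
  · intro j hj
    have hr := hrec j hj
    have hj0 : (0:ℝ) < j := by
      have : (2:ℝ) ≤ j := by exact_mod_cast hj
      linarith
    have hstep : d (j+1) - d j = ∑ i ∈ Finset.Icc 1 (j-1),
        d i * d (j-i) / (((j:ℝ) + 1) * (j.choose i)) := by rw [hr]; ring
    rw [hstep]
    have hbound : ∀ i ∈ Finset.Icc 1 (j-1),
        d i * d (j-i) / (((j:ℝ) + 1) * (j.choose i)) ≤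
          D^2 / ((j:ℝ) + 1) * ((1:ℝ) / (j.choose i)) := by
      intro i hi
      simp only [Finset.mem_Icc] at hi
      have hC : (0:ℝ) < (j.choose i : ℝ) := by
        exact_mod_cast Nat.choose_pos (by omega : i ≤ j)
      have ha := hpos i (by omega)
      have hb := hpos (j-i) (by omega)
      have hmul : d i * d (j-i) ≤ D^2 := by
        have := hD i (by omega)
        have := hD (j-i) (by omega)
        nlinarith
      have heq : D^2 / ((j:ℝ)+1) * (1/(j.choose i:ℝ)) = D^2 / (((j:ℝ)+1)*(j.choose i)) := by
        field_simp
      rw [heq]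
      exact (div_le_div_iff_of_pos_right (by positivity)).mpr hmul
    calc ∑ i ∈ Finset.Icc 1 (j-1), d i * d (j-i) / (((j:ℝ) + 1) * (j.choose i))
        ≤ ∑ i ∈ Finset.Icc 1 (j-1), D^2 / ((j:ℝ) + 1) * ((1:ℝ) / (j.choose i)) :=
          Finset.sum_le_sum hbound
      _ = D^2 / ((j:ℝ) + 1) * ∑ i ∈ Finset.Icc 1 (j-1), (1:ℝ) / (j.choose i) := by
          rw [Finset.mul_sum]
      _ ≤ D^2 / ((j:ℝ) + 1) * (4 / j) := by
          apply mul_le_mul_of_nonneg_left (sum_inv_choose_le j hj) (by positivity)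
      _ ≤ 8 * D ^ 2 / ((j : ℝ) * ((j : ℝ) + 1)) := by
          have heq : D^2/((j:ℝ)+1)*(4/(j:ℝ)) = 4*D^2/((j:ℝ)*((j:ℝ)+1)) := by
            field_simp
          rw [heq]
          exact (div_le_div_iff_of_pos_right (by positivity)).mpr (by nlinarith [sq_nonneg D])
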